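/- Let T be a coherent theory over a signature Σ. A coherent sequent over Σ is provable in T using the proof system of coherent logic if and only if it is provable in T using the proof system of geometric logic. -/

import Mathlib

universe u

/-- A (multi-sorted) first-order signature. -/
structure GeomSignature : Type (u + 1) where
  Sorts : Type u
  Funcs : Type u
  domF : Funcs → List Sorts
  codF : Funcs → Sorts
  Rels : Type u
  domR : Rels → List Sorts

variable {S : GeomSignature.{u}}

/-- A context: a type of variables together with a sort for each variable. -/
structure Ctx (S : GeomSignature.{u}) : Type (u + 1) where
  Var : Type u
  sortOf : Var → S.Sorts

/-- Extend a context by a fresh variable of sort `A`. -/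
@[reducible] def Ctx.cons (A : S.Sorts) (Γ : Ctx S) : Ctx S :=
  ⟨Option Γ.Var, fun v => match v with | none => A | some w => Γ.sortOf w⟩

/-- The empty context. -/
def Ctx.nil (S : GeomSignature.{u}) : Ctx S := ⟨PEmpty, fun v => v.elim⟩

/-- Terms over a signature in a context, indexed by their sort. -/
inductive Term (S : GeomSignature.{u}) : Ctx S → S.Sorts → Type (u + 1)
  | var {Γ : Ctx S} (v : Γ.Var) : Term S Γ (Γ.sortOf v)
  | func {Γ : Ctx S} (f : S.Funcs)
      (args : ∀ i : Fin (S.domF f).length, Term S Γ ((S.domF f).get i)) :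
      Term S Γ (S.codF f)

/-- A substitution from context `Γ` to context `Δ`. -/
abbrev Subst (S : GeomSignature.{u}) (Γ Δ : Ctx S) : Type (u + 1) :=
  ∀ v : Γ.Var, Term S Δ (Γ.sortOf v)

/-- Substitution acting on terms. -/
def Term.subst {Γ Δ : Ctx S} (σ : Subst S Γ Δ) : ∀ {A}, Term S Γ A → Term S Δ A
  | _, .var v => σ v
  | _, .func f args => .func f (fun i => (args i).subst σ)

/-- The weakening substitution `Γ → Γ.cons A`. -/
def Subst.wk (A : S.Sorts) {Γ : Ctx S} : Subst S Γ (Ctx.cons A Γ) :=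
  fun v => Term.var (Γ := Ctx.cons A Γ) (some v)

/-- Lift a substitution to extended contexts. -/
def Subst.lift {Γ Δ : Ctx S} (σ : Subst S Γ Δ) (A : S.Sorts) :
    Subst S (Ctx.cons A Γ) (Ctx.cons A Δ) :=
  fun v => match v with
  | none => Term.var (Γ := Ctx.cons A Δ) none
  | some w => (σ w).subst (Subst.wk A)

/-- The substitution `Γ.cons A → Γ` substituting the term `t` for the fresh variable. -/
def Subst.single {Γ : Ctx S} {A : S.Sorts} (t : Term S Γ A) : Subst S (Ctx.cons A Γ) Γ :=
  fun v => match v with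
  | none => t
  | some w => Term.var w

/-- Infinitary geometric formulas over a signature: atomic formulas, equality, truth,
falsity, binary conjunction, set-indexed disjunction and existential quantification. -/
inductive Formula (S : GeomSignature.{u}) : Ctx S → Type (u + 1)
  | rel {Γ : Ctx S} (R : S.Rels)
      (args : ∀ i : Fin (S.domR R).length, Term S Γ ((S.domR R).get i)) : Formula S Γ
  | eq {Γ : Ctx S} {A : S.Sorts} (t₁ t₂ : Term S Γ A) : Formula S Γ
  | true {Γ : Ctx S} : Formula S Γ
  | false {Γ : Ctx S} : Formula S Γ
  | conj {Γ : Ctx S} (φ ψ : Formula S Γ) : Formula S Γ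
  | disj {Γ : Ctx S} (I : Type u) (φ : I → Formula S Γ) : Formula S Γ
  | ex {Γ : Ctx S} (A : S.Sorts) (φ : Formula S (Ctx.cons A Γ)) : Formula S Γ

/-- Substitution acting on formulas. -/
def Formula.subst : ∀ {Γ Δ : Ctx S}, Subst S Γ Δ → Formula S Γ → Formula S Δ
  | _, _, σ, .rel R args => .rel R (fun i => (args i).subst σ)
  | _, _, σ, .eq t₁ t₂ => .eq (t₁.subst σ) (t₂.subst σ)
  | _, _, _, .true => .true
  | _, _, _, .false => .false
  | _, _, σ, .conj φ ψ => Formula.conj (Formula.subst σ φ) (Formula.subst σ ψ)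
  | _, _, σ, .disj I φ => .disj I (fun i => Formula.subst σ (φ i))
  | _, _, σ, .ex A φ => .ex A (Formula.subst (σ.lift A) φ)

/-- A sequent `φ ⊢_Γ ψ` between geometric formulas in a common context. -/
structure GeomSequent (S : GeomSignature.{u}) : Type (u + 1) where
  ctx : Ctx S
  lhs : Formula S ctx
  rhs : Formula S ctx

/-- A theory: a set of sequents (its axioms). -/
abbrev GeomTheory (S : GeomSignature.{u}) : Type (u + 1) := Set (GeomSequent S)

/-- Provability of sequents from a theory `T`, in the standard (intuitionistic) sequent
calculus of geometric logic, where the index types of disjunctions occurring in the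
disjunction rules are restricted by the predicate `Adm` (taking `Adm = fun _ => True`
gives geometric logic, `Adm = fun I => Finite I` gives coherent logic). -/
inductive Provable (Adm : Type u → Prop) (T : GeomTheory S) : GeomSequent S → Prop
  | ax {s : GeomSequent S} : s ∈ T → Provable Adm T s
  | id {Γ : Ctx S} (φ : Formula S Γ) : Provable Adm T ⟨Γ, φ, φ⟩
  | cut {Γ : Ctx S} {φ ψ χ : Formula S Γ} :
      Provable Adm T ⟨Γ, φ, ψ⟩ → Provable Adm T ⟨Γ, ψ, χ⟩ → Provable Adm T ⟨Γ, φ, χ⟩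
  | subst {Γ Δ : Ctx S} (σ : Subst S Γ Δ) {φ ψ : Formula S Γ} :
      Provable Adm T ⟨Γ, φ, ψ⟩ → Provable Adm T ⟨Δ, φ.subst σ, ψ.subst σ⟩
  | trueIntro {Γ : Ctx S} (φ : Formula S Γ) : Provable Adm T ⟨Γ, φ, .true⟩
  | falseElim {Γ : Ctx S} (φ : Formula S Γ) : Provable Adm T ⟨Γ, .false, φ⟩
  | conjIntro {Γ : Ctx S} {φ ψ χ : Formula S Γ} :
      Provable Adm T ⟨Γ, φ, ψ⟩ → Provable Adm T ⟨Γ, φ, χ⟩ → Provable Adm T ⟨Γ, φ, .conj ψ χ⟩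
  | conjElimL {Γ : Ctx S} (φ ψ : Formula S Γ) : Provable Adm T ⟨Γ, .conj φ ψ, φ⟩
  | conjElimR {Γ : Ctx S} (φ ψ : Formula S Γ) : Provable Adm T ⟨Γ, .conj φ ψ, ψ⟩
  | disjIntro {Γ : Ctx S} {I : Type u} (hI : Adm I) (φ : I → Formula S Γ) (i : I) :
      Provable Adm T ⟨Γ, φ i, .disj I φ⟩
  | disjElim {Γ : Ctx S} {I : Type u} (hI : Adm I) {φ : I → Formula S Γ} {ψ : Formula S Γ} :
      (∀ i : I, Provable Adm T ⟨Γ, φ i, ψ⟩) → Provable Adm T ⟨Γ, .disj I φ, ψ⟩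
  | distrib {Γ : Ctx S} {I : Type u} (hI : Adm I) (φ : Formula S Γ) (ψ : I → Formula S Γ) :
      Provable Adm T ⟨Γ, .conj φ (.disj I ψ), .disj I (fun i => .conj φ (ψ i))⟩
  | exAdj₁ {Γ : Ctx S} {A : S.Sorts} {φ : Formula S (Ctx.cons A Γ)} {ψ : Formula S Γ} :
      Provable Adm T ⟨Ctx.cons A Γ, φ, ψ.subst (Subst.wk A)⟩ → Provable Adm T ⟨Γ, .ex A φ, ψ⟩
  | exAdj₂ {Γ : Ctx S} {A : S.Sorts} {φ : Formula S (Ctx.cons A Γ)} {ψ : Formula S Γ} :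
      Provable Adm T ⟨Γ, .ex A φ, ψ⟩ → Provable Adm T ⟨Ctx.cons A Γ, φ, ψ.subst (Subst.wk A)⟩
  | frobenius {Γ : Ctx S} {A : S.Sorts} (φ : Formula S Γ) (ψ : Formula S (Ctx.cons A Γ)) :
      Provable Adm T ⟨Γ, .conj φ (.ex A ψ), .ex A (.conj (φ.subst (Subst.wk A)) ψ)⟩
  | eqRefl {Γ : Ctx S} {A : S.Sorts} (t : Term S Γ A) : Provable Adm T ⟨Γ, .true, .eq t t⟩
  | eqSubst {Γ : Ctx S} {A : S.Sorts} (t u : Term S Γ A) (φ : Formula S (Ctx.cons A Γ)) :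
      Provable Adm T ⟨Γ, .conj (.eq t u) (φ.subst (Subst.single t)), φ.subst (Subst.single u)⟩

/-- Provability in geometric logic (arbitrary disjunctions allowed). -/
def GeomProvable (T : GeomTheory S) (s : GeomSequent S) : Prop :=
  Provable (fun _ => True) T s

/-- Provability in coherent logic (only finite disjunctions allowed). -/
def CohProvable (T : GeomTheory S) (s : GeomSequent S) : Prop :=
  Provable (fun I => Finite I) T s

/-- Coherent formulas: geometric formulas all of whose disjunctions are finite. -/
inductive Formula.IsCoherent : ∀ {Γ : Ctx S}, Formula S Γ → Prop
  | rel {Γ : Ctx S} (R : S.Rels) (args) : (Formula.rel (Γ := Γ) R args).IsCoherent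
  | eq {Γ : Ctx S} {A : S.Sorts} (t₁ t₂ : Term S Γ A) : (Formula.eq t₁ t₂).IsCoherent
  | true {Γ : Ctx S} : (Formula.true (Γ := Γ)).IsCoherent
  | false {Γ : Ctx S} : (Formula.false (Γ := Γ)).IsCoherent
  | conj {Γ : Ctx S} {φ ψ : Formula S Γ} : φ.IsCoherent → ψ.IsCoherent → (φ.conj ψ).IsCoherent
  | disj {Γ : Ctx S} {I : Type u} (hI : Finite I) {φ : I → Formula S Γ} :
      (∀ i, (φ i).IsCoherent) → (Formula.disj I φ).IsCoherent
  | ex {Γ : Ctx S} {A : S.Sorts} {φ : Formula S (Ctx.cons A Γ)} :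
      φ.IsCoherent → (φ.ex (A := A)).IsCoherent

/-- A coherent sequent: both sides are coherent formulas. -/
def GeomSequent.IsCoherent (s : GeomSequent S) : Prop :=
  s.lhs.IsCoherent ∧ s.rhs.IsCoherent

/-- A coherent theory: all axioms are coherent sequents. -/
def GeomTheory.IsCoherent (T : GeomTheory S) : Prop :=
  ∀ s ∈ T, GeomSequent.IsCoherent s

section Conservativity

variable {S : GeomSignature.{u}} {T : GeomTheory S}

/-- Finite disjunction of a list of formulas. -/
def fDisj {Γ : Ctx S} : List (Formula S Γ) → Formula S Γ
  | [] => .false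
  | a :: L => .disj (ULift Bool) (fun i => cond i.down a (fDisj L))

lemma fDisj_subst {Γ Δ : Ctx S} (σ : Subst S Γ Δ) (L : List (Formula S Γ)) :
    (fDisj L).subst σ = fDisj (L.map (Formula.subst σ)) := by
  induction L with
  | nil => rfl
  | cons a L ih =>
    show Formula.disj _ _ = Formula.disj _ _
    congr 1
    funext i
    rcases i with ⟨b⟩
    cases b
    · exact ih
    · rfl

lemma fDisj_elim {Γ : Ctx S} {L : List (Formula S Γ)} {χ : Formula S Γ}
    (h : ∀ d ∈ L, CohProvable T ⟨Γ, d, χ⟩) : CohProvable T ⟨Γ, fDisj L, χ⟩ := by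
  induction L with
  | nil => exact Provable.falseElim χ
  | cons a L ih =>
    refine Provable.disjElim (inferInstance : Finite (ULift Bool)) ?_
    rintro ⟨b⟩
    cases b
    · exact ih fun d hd => h d (List.mem_cons_of_mem a hd)
    · exact h a List.mem_cons_self

lemma fDisj_intro {Γ : Ctx S} {L : List (Formula S Γ)} {d : Formula S Γ}
    (hd : d ∈ L) : CohProvable T ⟨Γ, d, fDisj L⟩ := by
  induction L with
  | nil => cases hd
  | cons a L ih =>
    rcases List.mem_cons.mp hd with rfl | hd'
    · exact Provable.disjIntro (inferInstance : Finite (ULift Bool))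
        (fun i : ULift Bool => cond i.down d (fDisj L)) (ULift.up true)
    · exact Provable.cut (ih hd')
        (Provable.disjIntro (inferInstance : Finite (ULift Bool))
          (fun i : ULift Bool => cond i.down a (fDisj L)) (ULift.up false))

lemma fDisj_mono {Γ : Ctx S} {L₁ L₂ : List (Formula S Γ)}
    (h : ∀ d ∈ L₁, d ∈ L₂) : CohProvable T ⟨Γ, fDisj L₁, fDisj L₂⟩ :=
  fDisj_elim fun d hd => fDisj_intro (h d hd)

lemma conj_comm' {Γ : Ctx S} (a b : Formula S Γ) :
    CohProvable T ⟨Γ, .conj a b, .conj b a⟩ :=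
  Provable.conjIntro (Provable.conjElimR a b) (Provable.conjElimL a b)

lemma conj_fDisj {Γ : Ctx S} (a : Formula S Γ) (L : List (Formula S Γ)) :
    CohProvable T ⟨Γ, .conj a (fDisj L), fDisj (L.map (fun x => .conj a x))⟩ := by
  induction L with
  | nil => exact Provable.conjElimR a Formula.false
  | cons b L ih =>
    refine Provable.cut (Provable.distrib (inferInstance : Finite (ULift Bool)) a
      (fun i : ULift Bool => cond i.down b (fDisj L))) ?_
    refine Provable.disjElim (inferInstance : Finite (ULift Bool)) ?_
    rintro ⟨bb⟩
    cases bb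
    · exact Provable.cut ih (fDisj_mono fun d hd => List.mem_cons_of_mem _ hd)
    · exact fDisj_intro List.mem_cons_self

lemma conj_fDisj_elim {Γ : Ctx S} {L₁ L₂ : List (Formula S Γ)} {χ : Formula S Γ}
    (h : ∀ x ∈ L₁, ∀ y ∈ L₂, CohProvable T ⟨Γ, .conj x y, χ⟩) :
    CohProvable T ⟨Γ, .conj (fDisj L₁) (fDisj L₂), χ⟩ := by
  refine Provable.cut (conj_fDisj _ _) (fDisj_elim ?_)
  intro d hd
  rcases List.mem_map.mp hd with ⟨y, hy, rfl⟩
  refine Provable.cut (conj_comm' _ _) (Provable.cut (conj_fDisj _ _) (fDisj_elim ?_))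
  intro d hd
  rcases List.mem_map.mp hd with ⟨x, hx, rfl⟩
  exact Provable.cut (conj_comm' _ _) (h x hx y hy)

/-- The set of coherent "disjuncts" of a geometric formula. -/
def Pos : ∀ {Γ : Ctx S}, Formula S Γ → Set (Formula S Γ)
  | _, .rel R args => {.rel R args}
  | _, .eq t u => {.eq t u}
  | _, .true => {.true}
  | _, .false => {.false}
  | _, .conj a b => {x | ∃ p ∈ Pos a, ∃ q ∈ Pos b, x = .conj p q}
  | _, .disj _ f => {x | ∃ i, x ∈ Pos (f i)}
  | _, .ex A f => {x | ∃ p ∈ Pos f, x = .ex A p}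

lemma Pos_subst {Γ : Ctx S} (φ : Formula S Γ) :
    ∀ {Δ : Ctx S} (σ : Subst S Γ Δ), Pos (φ.subst σ) = Formula.subst σ '' Pos φ := by
  induction φ with
  | rel R args => intro Δ σ; simp [Pos, Formula.subst]
  | eq t u => intro Δ σ; simp [Pos, Formula.subst]
  | true => intro Δ σ; simp [Pos, Formula.subst]
  | false => intro Δ σ; simp [Pos, Formula.subst]
  | conj a b iha ihb =>
    intro Δ σ
    ext x
    simp only [Formula.subst, Pos, Set.mem_setOf_eq, Set.mem_image, iha, ihb]
    constructor
    · rintro ⟨p, ⟨p0, hp0, rfl⟩, q, ⟨q0, hq0, rfl⟩, rfl⟩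
      exact ⟨.conj p0 q0, ⟨p0, hp0, q0, hq0, rfl⟩, rfl⟩
    · rintro ⟨y, ⟨p0, hp0, q0, hq0, rfl⟩, rfl⟩
      exact ⟨_, ⟨p0, hp0, rfl⟩, _, ⟨q0, hq0, rfl⟩, rfl⟩
  | disj I f ih =>
    intro Δ σ
    ext x
    simp only [Formula.subst, Pos, Set.mem_setOf_eq, Set.mem_image, ih]
    constructor
    · rintro ⟨i, y, hy, rfl⟩
      exact ⟨y, ⟨i, hy⟩, rfl⟩
    · rintro ⟨y, ⟨i, hy⟩, rfl⟩
      exact ⟨i, y, hy, rfl⟩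
  | ex A f ih =>
    intro Δ σ
    ext x
    simp only [Formula.subst, Pos, Set.mem_setOf_eq, Set.mem_image, ih]
    constructor
    · rintro ⟨p, ⟨p0, hp0, rfl⟩, rfl⟩
      exact ⟨.ex A p0, ⟨p0, hp0, rfl⟩, rfl⟩
    · rintro ⟨y, ⟨p0, hp0, rfl⟩, rfl⟩
      exact ⟨_, ⟨p0, hp0, rfl⟩, rfl⟩

lemma Pos_le {Γ : Ctx S} {φ : Formula S Γ} (hφ : φ.IsCoherent) :
    ∀ c ∈ Pos φ, CohProvable T ⟨Γ, c, φ⟩ := by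
  induction hφ with
  | rel R args =>
    intro c hc; simp only [Pos, Set.mem_singleton_iff] at hc; subst hc; exact Provable.id _
  | eq t u =>
    intro c hc; simp only [Pos, Set.mem_singleton_iff] at hc; subst hc; exact Provable.id _
  | true =>
    intro c hc; simp only [Pos, Set.mem_singleton_iff] at hc; subst hc; exact Provable.id _
  | false =>
    intro c hc; simp only [Pos, Set.mem_singleton_iff] at hc; subst hc; exact Provable.id _
  | conj h1 h2 ih1 ih2 =>
    rintro c ⟨p, hp, q, hq, rfl⟩
    exact Provable.conjIntro (Provable.cut (Provable.conjElimL p q) (ih1 p hp))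
      (Provable.cut (Provable.conjElimR p q) (ih2 q hq))
  | disj hI h ih =>
    rintro c ⟨i, hi⟩
    exact Provable.cut (ih i c hi) (Provable.disjIntro hI _ i)
  | ex h ih =>
    rintro c ⟨p, hp, rfl⟩
    exact Provable.exAdj₁ (Provable.cut (ih p hp) (Provable.exAdj₂ (Provable.id _)))

lemma Pos_ge {Γ : Ctx S} {φ : Formula S Γ} (hφ : φ.IsCoherent) :
    ∃ L : List (Formula S Γ), (∀ d ∈ L, d ∈ Pos φ) ∧ CohProvable T ⟨Γ, φ, fDisj L⟩ := by
  induction hφ with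
  | rel R args =>
    exact ⟨[_], by simp [Pos], fDisj_intro (List.mem_singleton.mpr rfl)⟩
  | eq t u =>
    exact ⟨[_], by simp [Pos], fDisj_intro (List.mem_singleton.mpr rfl)⟩
  | true =>
    exact ⟨[_], by simp [Pos], fDisj_intro (List.mem_singleton.mpr rfl)⟩
  | false =>
    exact ⟨[_], by simp [Pos], fDisj_intro (List.mem_singleton.mpr rfl)⟩
  | @conj Γ φ ψ h1 h2 ih1 ih2 =>
    obtain ⟨L₁, hL₁, p₁⟩ := ih1
    obtain ⟨L₂, hL₂, p₂⟩ := ih2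
    refine ⟨L₁.flatMap fun x => L₂.map fun y => .conj x y, ?_, ?_⟩
    · intro d hd
      rcases List.mem_flatMap.mp hd with ⟨x, hx, hd'⟩
      rcases List.mem_map.mp hd' with ⟨y, hy, rfl⟩
      exact ⟨x, hL₁ x hx, y, hL₂ y hy, rfl⟩
    · refine Provable.cut (Provable.conjIntro
        (Provable.cut (Provable.conjElimL φ ψ) p₁)
        (Provable.cut (Provable.conjElimR φ ψ) p₂)) (conj_fDisj_elim ?_)
      intro x hx y hy
      exact fDisj_intro (List.mem_flatMap.mpr ⟨x, hx, List.mem_map.mpr ⟨y, hy, rfl⟩⟩)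
  | @disj Γ I hI f h ih =>
    choose Lf hLf pf using ih
    have : Fintype I := @Fintype.ofFinite I hI
    refine ⟨(Finset.univ : Finset I).toList.flatMap Lf, ?_, ?_⟩
    · intro d hd
      rcases List.mem_flatMap.mp hd with ⟨i, _, hd'⟩
      exact ⟨i, hLf i d hd'⟩
    · refine Provable.disjElim hI fun i => Provable.cut (pf i) (fDisj_mono ?_)
      intro d hd
      exact List.mem_flatMap.mpr ⟨i, Finset.mem_toList.mpr (Finset.mem_univ i), hd⟩
  | @ex Γ A φ h ih =>
    obtain ⟨L, hL, p⟩ := ih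
    refine ⟨L.map (Formula.ex A), ?_, ?_⟩
    · intro d hd
      rcases List.mem_map.mp hd with ⟨x, hx, rfl⟩
      exact ⟨x, hL x hx, rfl⟩
    · refine Provable.exAdj₁ ?_
      rw [fDisj_subst]
      refine Provable.cut p (fDisj_elim fun x hx => ?_)
      refine Provable.cut (Provable.exAdj₂ (Provable.id (Formula.ex A x))) ?_
      exact fDisj_intro (List.mem_map.mpr ⟨_, List.mem_map.mpr ⟨x, hx, rfl⟩, rfl⟩)

lemma list_image {α β : Type*} {f : α → β} {s : Set α} {L' : List β}
    (h : ∀ d ∈ L', d ∈ f '' s) :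
    ∃ L : List α, (∀ e ∈ L, e ∈ s) ∧ L' = L.map f := by
  induction L' with
  | nil => exact ⟨[], by simp, rfl⟩
  | cons b L' ih =>
    obtain ⟨L, hL, rfl⟩ := ih fun d hd => h d (List.mem_cons_of_mem _ hd)
    obtain ⟨a, ha, rfl⟩ := h b List.mem_cons_self
    refine ⟨a :: L, ?_, rfl⟩
    intro e he
    rcases List.mem_cons.mp he with rfl | he'
    · exact ha
    · exact hL e he'

lemma good (hT : T.IsCoherent) {s : GeomSequent S}
    (h : Provable (fun _ => True) T s) :
    ∀ c ∈ Pos s.lhs, ∃ L : List (Formula S s.ctx),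
      (∀ d ∈ L, d ∈ Pos s.rhs) ∧ CohProvable T ⟨s.ctx, c, fDisj L⟩ := by
  induction h with
  | @ax s hs =>
    intro c hc
    obtain ⟨h1, h2⟩ := hT s hs
    obtain ⟨L, hL, p⟩ := Pos_ge (T := T) h2
    exact ⟨L, hL, Provable.cut (Pos_le h1 c hc) (Provable.cut (Provable.ax hs) p)⟩
  | id φ =>
    intro c hc
    exact ⟨[c], fun d hd => (List.mem_singleton.mp hd) ▸ hc,
      fDisj_intro (List.mem_singleton.mpr rfl)⟩
  | cut h1 h2 ih1 ih2 =>
    intro c hc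
    obtain ⟨L, hL, p⟩ := ih1 c hc
    choose K hK pK using fun (d : { d // d ∈ L }) => ih2 d.1 (hL d.1 d.2)
    refine ⟨L.attach.flatMap fun d => K d, ?_, Provable.cut p (fDisj_elim ?_)⟩
    · intro d hd
      rcases List.mem_flatMap.mp hd with ⟨e, _, hd'⟩
      exact hK e d hd'
    · intro d hd
      refine Provable.cut (pK ⟨d, hd⟩) (fDisj_mono fun e he => ?_)
      exact List.mem_flatMap.mpr ⟨⟨d, hd⟩, List.mem_attach _ _, he⟩
  | @subst Γ Δ σ φ ψ h ih =>
    intro c hc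
    rw [Pos_subst] at hc
    obtain ⟨c0, hc0, rfl⟩ := hc
    obtain ⟨L, hL, p⟩ := ih c0 hc0
    refine ⟨L.map (Formula.subst σ), ?_, ?_⟩
    · intro d hd
      rcases List.mem_map.mp hd with ⟨e, he, rfl⟩
      rw [Pos_subst]
      exact ⟨e, hL e he, rfl⟩
    · have := Provable.subst σ p
      rwa [fDisj_subst] at this
  | trueIntro φ =>
    intro c hc
    refine ⟨[.true], ?_, Provable.cut (Provable.trueIntro c)
      (fDisj_intro (List.mem_singleton.mpr rfl))⟩
    intro d hd
    rw [List.mem_singleton.mp hd]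
    exact rfl
  | falseElim φ =>
    intro c hc
    simp only [Pos, Set.mem_singleton_iff] at hc
    subst hc
    exact ⟨[], by simp, Provable.falseElim _⟩
  | conjIntro h1 h2 ih1 ih2 =>
    intro c hc
    obtain ⟨L₁, hL₁, p₁⟩ := ih1 c hc
    obtain ⟨L₂, hL₂, p₂⟩ := ih2 c hc
    refine ⟨L₁.flatMap fun x => L₂.map fun y => .conj x y, ?_, ?_⟩
    · intro d hd
      rcases List.mem_flatMap.mp hd with ⟨x, hx, hd'⟩
      rcases List.mem_map.mp hd' with ⟨y, hy, rfl⟩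
      exact ⟨x, hL₁ x hx, y, hL₂ y hy, rfl⟩
    · refine Provable.cut (Provable.conjIntro p₁ p₂) (conj_fDisj_elim ?_)
      intro x hx y hy
      exact fDisj_intro (List.mem_flatMap.mpr ⟨x, hx, List.mem_map.mpr ⟨y, hy, rfl⟩⟩)
  | conjElimL φ ψ =>
    rintro c ⟨p, hp, q, hq, rfl⟩
    exact ⟨[p], fun d hd => (List.mem_singleton.mp hd) ▸ hp,
      Provable.cut (Provable.conjElimL p q) (fDisj_intro (List.mem_singleton.mpr rfl))⟩
  | conjElimR φ ψ =>
    rintro c ⟨p, hp, q, hq, rfl⟩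
    exact ⟨[q], fun d hd => (List.mem_singleton.mp hd) ▸ hq,
      Provable.cut (Provable.conjElimR p q) (fDisj_intro (List.mem_singleton.mpr rfl))⟩
  | @disjIntro Γ I hI φ i =>
    intro c hc
    exact ⟨[c], fun d hd => (List.mem_singleton.mp hd) ▸ ⟨i, hc⟩,
      fDisj_intro (List.mem_singleton.mpr rfl)⟩
  | disjElim hI h ih =>
    rintro c ⟨i, hi⟩
    exact ih i c hi
  | @distrib Γ I hI φ ψ =>
    rintro c ⟨p, hp, q, hq, rfl⟩
    obtain ⟨i, hqi⟩ := hq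
    exact ⟨[.conj p q], fun d hd => (List.mem_singleton.mp hd) ▸ ⟨i, p, hp, q, hqi, rfl⟩,
      fDisj_intro (List.mem_singleton.mpr rfl)⟩
  | @exAdj₁ Γ A φ ψ h ih =>
    rintro c ⟨p, hp, rfl⟩
    obtain ⟨L', hL', pf⟩ := ih p hp
    have himg : ∀ d ∈ L', d ∈ Formula.subst (Subst.wk A) '' Pos ψ := by
      intro d hd
      have := hL' d hd
      rwa [Pos_subst] at this
    obtain ⟨L, hL, rfl⟩ := list_image himg
    refine ⟨L, hL, Provable.exAdj₁ ?_⟩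
    rw [fDisj_subst]
    exact pf
  | @exAdj₂ Γ A φ ψ h ih =>
    intro c hc
    obtain ⟨L, hL, pf⟩ := ih (.ex A c) ⟨c, hc, rfl⟩
    refine ⟨L.map (Formula.subst (Subst.wk A)), ?_, ?_⟩
    · intro d hd
      rcases List.mem_map.mp hd with ⟨e, he, rfl⟩
      rw [Pos_subst]
      exact ⟨e, hL e he, rfl⟩
    · have := Provable.exAdj₂ pf
      rwa [fDisj_subst] at this
  | @frobenius Γ A φ ψ =>
    rintro c ⟨p, hp, q, hq, rfl⟩
    obtain ⟨y, hy, rfl⟩ := hq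
    refine ⟨[.ex A (.conj (p.subst (Subst.wk A)) y)], ?_, ?_⟩
    · intro d hd
      rw [List.mem_singleton.mp hd]
      refine ⟨.conj (p.subst (Subst.wk A)) y, ⟨p.subst (Subst.wk A), ?_, y, hy, rfl⟩, rfl⟩
      rw [Pos_subst]
      exact ⟨p, hp, rfl⟩
    · exact Provable.cut (Provable.frobenius p y) (fDisj_intro (List.mem_singleton.mpr rfl))
  | eqRefl t =>
    intro c hc
    simp only [Pos, Set.mem_singleton_iff] at hc
    subst hc
    exact ⟨[.eq t t], fun d hd => by rw [List.mem_singleton.mp hd]; simp [Pos],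
      Provable.cut (Provable.eqRefl t) (fDisj_intro (List.mem_singleton.mpr rfl))⟩
  | @eqSubst Γ A t u φ =>
    rintro c ⟨p, hp, q, hq, rfl⟩
    rw [Pos_subst] at hq
    obtain ⟨e, he, rfl⟩ := hq
    simp only [Pos, Set.mem_singleton_iff] at hp
    subst hp
    refine ⟨[e.subst (Subst.single u)], ?_,
      Provable.cut (Provable.eqSubst t u e) (fDisj_intro (List.mem_singleton.mpr rfl))⟩
    intro d hd
    rw [List.mem_singleton.mp hd, Pos_subst]
    exact ⟨e, he, rfl⟩

lemma provable_mono {Adm Adm' : Type u → Prop} (hA : ∀ I, Adm I → Adm' I)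
    {T : GeomTheory S} {s : GeomSequent S} (h : Provable Adm T s) : Provable Adm' T s := by
  induction h with
  | ax h => exact .ax h
  | id φ => exact .id φ
  | cut _ _ ih1 ih2 => exact .cut ih1 ih2
  | subst σ _ ih => exact .subst σ ih
  | trueIntro φ => exact .trueIntro φ
  | falseElim φ => exact .falseElim φ
  | conjIntro _ _ ih1 ih2 => exact .conjIntro ih1 ih2
  | conjElimL φ ψ => exact .conjElimL φ ψ
  | conjElimR φ ψ => exact .conjElimR φ ψ
  | disjIntro hI φ i => exact .disjIntro (hA _ hI) φ i
  | disjElim hI _ ih => exact .disjElim (hA _ hI) ih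
  | distrib hI φ ψ => exact .distrib (hA _ hI) φ ψ
  | exAdj₁ _ ih => exact .exAdj₁ ih
  | exAdj₂ _ ih => exact .exAdj₂ ih
  | frobenius φ ψ => exact .frobenius φ ψ
  | eqRefl t => exact .eqRefl t
  | eqSubst t u φ => exact .eqSubst t u φ

end Conservativity

/-- For a coherent theory `T`, a coherent sequent is provable from `T` in coherent logic
iff it is provable from `T` in geometric logic. -/
theorem cohProvable_iff_geomProvable {S : GeomSignature.{u}} (T : GeomTheory S)
    (hT : T.IsCoherent) (σ : GeomSequent S) (hσ : σ.IsCoherent) :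
    CohProvable T σ ↔ GeomProvable T σ := by
  constructor
  · exact fun h => provable_mono (fun I _ => trivial) h
  · intro h
    obtain ⟨Γ, φ, ψ⟩ := σ
    obtain ⟨h1, h2⟩ := hσ
    obtain ⟨L₀, hL₀, p₀⟩ := Pos_ge (T := T) h1
    refine Provable.cut p₀ (fDisj_elim fun c hc => ?_)
    obtain ⟨L, hL, p⟩ := good hT h c (hL₀ c hc)
    exact Provable.cut p (fDisj_elim fun d hd => Pos_le h2 d (hL d hd))
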